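/- For every positive integer k there exists a tournament T on the vertex set {0,1}^k of the k-dimensional hypercube graph Q_k such that, for every vertex v, both the subgraph of Q_k induced on the closed out-neighbourhood N⁺_T[v] and the subgraph of Q_k induced on the closed in-neighbourhood N⁻_T[v] are forests. -/

import Mathlib

/-- A tournament on `V`: an orientation of the complete graph, i.e. an irreflexive
relation such that for distinct vertices exactly one direction is present. -/
def IsTournament {V : Type*} (r : V → V → Prop) : Prop :=
  (∀ v, ¬ r v v) ∧ ∀ u v : V, u ≠ v → (r u v ↔ ¬ r v u)

/-- The k-dimensional hypercube graph on vertex set `{0,1}^k`: two vertices are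
adjacent iff they differ in exactly one coordinate. -/
def cubeGraph (k : ℕ) : SimpleGraph (Fin k → Bool) :=
  SimpleGraph.fromRel (fun x y => (Finset.univ.filter fun i => x i ≠ y i).card = 1)

section Aux
open SimpleGraph



def diffs {k : ℕ} (u v : Fin k → Bool) : Finset (Fin k) :=
  Finset.univ.filter fun i => u i ≠ v i

lemma mem_diffs {k : ℕ} {u v : Fin k → Bool} {i : Fin k} :
    i ∈ diffs u v ↔ u i ≠ v i := by simp [diffs]

lemma diffs_comm {k : ℕ} (u v : Fin k → Bool) : diffs u v = diffs v u := by
  ext i; simp [mem_diffs, ne_comm]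

lemma diffs_nonempty {k : ℕ} {u v : Fin k → Bool} (h : u ≠ v) : (diffs u v).Nonempty := by
  obtain ⟨i, hi⟩ := Function.ne_iff.mp h
  exact ⟨i, mem_diffs.2 hi⟩

def rel {k : ℕ} (u v : Fin k → Bool) : Prop :=
  ∃ h : (diffs u v).Nonempty, (u ((diffs u v).min' h) = true ↔ Even (diffs u v).card)

lemma min'_eq_of_eq {α : Type*} [LinearOrder α] {s t : Finset α} (h : s = t)
    {hs : s.Nonempty} {ht : t.Nonempty} : s.min' hs = t.min' ht := by subst h; rfl

lemma rel_irrefl {k : ℕ} (v : Fin k → Bool) : ¬ rel v v := by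
  rintro ⟨⟨i, hi⟩, -⟩; exact mem_diffs.1 hi rfl

lemma rel_asymm {k : ℕ} {u v : Fin k → Bool} (h : u ≠ v) : rel u v ↔ ¬ rel v u := by
  have hne : (diffs u v).Nonempty := diffs_nonempty h
  have hne' : (diffs v u).Nonempty := diffs_nonempty h.symm
  have hset : diffs v u = diffs u v := diffs_comm v u
  have hmin : (diffs v u).min' hne' = (diffs u v).min' hne := min'_eq_of_eq hset
  have hcard : (diffs v u).card = (diffs u v).card := by rw [hset]
  have hmem : (diffs u v).min' hne ∈ diffs u v := Finset.min'_mem _ _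
  have hneq : u ((diffs u v).min' hne) ≠ v ((diffs u v).min' hne) := mem_diffs.1 hmem
  unfold rel
  rw [hcard]
  constructor
  · rintro ⟨h1, h2⟩ ⟨h3, h4⟩
    rw [hmin] at h4
    cases hu : u ((diffs u v).min' hne) <;> cases hv : v ((diffs u v).min' hne) <;>
      simp_all [Nat.even_iff, Nat.odd_iff]
  · intro hn
    refine ⟨hne, ?_⟩
    by_contra hc
    apply hn
    refine ⟨hne', ?_⟩
    rw [hmin]
    cases hu : u ((diffs u v).min' hne) <;> cases hv : v ((diffs u v).min' hne) <;>
      simp_all [Nat.even_iff, Nat.odd_iff]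





lemma ne_of_isPath {V : Type*} {G : SimpleGraph V} {a b : V} {p : G.Walk a b}
    (hp : p.IsPath) (h : ¬ p.Nil) : a ≠ b := by
  cases p with
  | nil => simp at h
  | cons hadj p' =>
    rw [SimpleGraph.Walk.cons_isPath_iff] at hp
    rintro rfl
    exact hp.2 p'.end_mem_support

lemma isAcyclic_of_rank {V : Type*} (G : SimpleGraph V) (ρ : V → ℕ)
    (h : ∀ w u₁ u₂, G.Adj w u₁ → G.Adj w u₂ → ρ u₁ ≤ ρ w → ρ u₂ ≤ ρ w → u₁ = u₂) :
    G.IsAcyclic := by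
  classical
  intro v c hc
  -- pick a maximal-rank vertex on the cycle
  obtain ⟨w, hwarg⟩ : ∃ w, w ∈ c.support.argmax ρ := by
    rcases Option.eq_none_or_eq_some (c.support.argmax ρ) with h0 | ⟨w, hw⟩
    · exact absurd (List.argmax_eq_none.mp h0) c.support_ne_nil
    · exact ⟨w, hw⟩
  have hwmem : w ∈ c.support := List.argmax_mem hwarg
  have hwmax : ∀ x ∈ c.support, ρ x ≤ ρ w := fun x hx => List.le_of_mem_argmax hx hwarg
  set c' := c.rotate w hwmem with hc'def
  have hc' : c'.IsCycle := hc.rotate hwmem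
  have hlen3 : 3 ≤ c'.length := hc'.three_le_length
  have hnn : ¬ c'.Nil := Walk.not_nil_iff_lt_length.mpr (by omega)
  have hadj1 : G.Adj w (c'.getVert 1) := c'.adj_snd hnn
  have hdec : Walk.cons hadj1 c'.tail = c' := c'.cons_tail_eq hnn
  set u₁ := c'.getVert 1 with hu₁
  set q := c'.tail with hqdef
  have hqlen : q.length + 1 = c'.length := Walk.length_tail_add_one hnn
  have hcyc2 : (Walk.cons hadj1 q).IsCycle := by rw [hdec]; exact hc'
  have hq : q.IsPath := ((Walk.cons_isCycle_iff q hadj1).mp hcyc2).1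
  set qr := q.reverse with hqrdef
  have hqr : qr.IsPath := hq.reverse
  have hqrlen : qr.length = q.length := q.length_reverse
  have hnn2 : ¬ qr.Nil := Walk.not_nil_iff_lt_length.mpr (by omega)
  set u₂ := qr.getVert 1 with hu₂
  have hadj2 : G.Adj w u₂ := qr.adj_snd hnn2
  -- u₂ ≠ u₁
  have htl : qr.tail.IsPath := hqr.tail
  have htlen : qr.tail.length + 1 = qr.length := Walk.length_tail_add_one hnn2
  have hne12 : u₂ ≠ u₁ := ne_of_isPath htl (Walk.not_nil_iff_lt_length.mpr (by omega))
  -- memberships in c'.support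
  have hmem1 : u₁ ∈ c'.support :=
    Walk.mem_support_iff_exists_getVert.mpr ⟨1, rfl, by omega⟩
  have hmem2 : u₂ ∈ c'.support := by
    have h2q : u₂ ∈ qr.support :=
      Walk.mem_support_iff_exists_getVert.mpr ⟨1, rfl, by omega⟩
    have : u₂ ∈ q.support := by
      rw [hqrdef, Walk.support_reverse, List.mem_reverse] at h2q
      exact h2q
    rw [← hdec, Walk.support_cons]
    exact List.mem_cons_of_mem _ this
  -- maximality transfers through rotation
  have hsub : ∀ x ∈ c'.support, ρ x ≤ ρ w := by
    intro x hx
    by_cases hxw : x = w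
    · subst hxw; exact le_refl _
    · have hx' : x ∈ c'.support.tail := by
        rw [c'.support_eq_cons, List.mem_cons] at hx
        exact hx.resolve_left hxw
      have hrot := c.support_rotate w hwmem
      have : x ∈ c.support.tail := (hrot.mem_iff).mp hx'
      exact hwmax x (List.mem_of_mem_tail this)
  exact hne12 (h w u₂ u₁ hadj2 hadj1 (hsub u₂ hmem2) (hsub u₁ hmem1))

/-- the rank of `u` relative to `v`: binary value of the coordinatewise xor -/
def rank {k : ℕ} (v u : Fin k → Bool) : ℕ :=
  ∑ i : Fin k, if u i ≠ v i then 2 ^ (i : ℕ) else 0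

lemma rank_lt {k : ℕ} {v u w : Fin k → Bool} {t : Fin k}
    (hd : diffs u w = {t}) (hut : u t = v t) : rank v u < rank v w := by
  have htuw : u t ≠ w t := mem_diffs.mp (hd ▸ Finset.mem_singleton_self t)
  have hwt : w t ≠ v t := fun h => htuw (hut.trans h.symm)
  have hoff : ∀ i, i ≠ t → u i = w i := by
    intro i hi
    by_contra hne
    exact hi (Finset.mem_singleton.mp (hd ▸ mem_diffs.mpr hne))
  apply Finset.sum_lt_sum
  · intro i _
    by_cases hi : i = t
    · subst hi; simp [hut]
    · rw [hoff i hi]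
  · refine ⟨t, Finset.mem_univ t, ?_⟩
    simp [hut, hwt]

/-- uniqueness of the "down" coordinate, out-neighbourhood version -/
lemma down_unique_out {k : ℕ} {v w u : Fin k → Bool} {t : Fin k}
    (hw : w = v ∨ rel v w) (hu : u = v ∨ rel v u)
    (hd : diffs u w = {t}) (hut : u t = v t) (hne : (diffs v w).Nonempty) :
    t = (diffs v w).min' hne := by
  have htuw : u t ≠ w t := mem_diffs.mp (hd ▸ Finset.mem_singleton_self t)
  have hwt : w t ≠ v t := fun h => htuw (hut.trans h.symm)
  have hoff : ∀ i, i ≠ t → u i = w i := by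
    intro i hi
    by_contra hne2
    exact hi (Finset.mem_singleton.mp (hd ▸ mem_diffs.mpr hne2))
  have htvw : t ∈ diffs v w := mem_diffs.mpr (Ne.symm hwt)
  have herase : diffs v u = (diffs v w).erase t := by
    ext i
    simp only [mem_diffs, Finset.mem_erase]
    by_cases hi : i = t
    · subst hi
      constructor
      · intro hh; exact absurd hut.symm hh
      · rintro ⟨hh, -⟩; exact absurd rfl hh
    · rw [hoff i hi]
      exact ⟨fun hh => ⟨hi, hh⟩, fun hh => hh.2⟩
  rcases hu with hu | hu
  · -- u = v ⇒ diffs v w = {t}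
    have hemp : (diffs v w).erase t = ∅ := by
      rw [← herase, hu]; ext i; simp [mem_diffs]
    have h0 : diffs v w = {t} := by
      apply Finset.eq_singleton_iff_unique_mem.mpr
      refine ⟨htvw, fun x hx => ?_⟩
      by_contra hxt
      have hx' : x ∈ (diffs v w).erase t := Finset.mem_erase.mpr ⟨hxt, hx⟩
      rw [hemp] at hx'
      exact absurd hx' (Finset.notMem_empty x)
    have := min'_eq_of_eq h0 (hs := hne) (ht := Finset.singleton_nonempty t)
    rw [this, Finset.min'_singleton]
  · rcases hw with hw | hw
    · subst hw; exact absurd rfl hwt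
    · obtain ⟨hne_w, hcond_w⟩ := hw
      obtain ⟨hne_u, hcond_u⟩ := hu
      have hminw : (diffs v w).min' hne_w = (diffs v w).min' hne := rfl
      set j := (diffs v w).min' hne with hj
      rw [hminw] at hcond_w
      by_contra htj
      have hjmem : j ∈ diffs v w := Finset.min'_mem _ _
      have hjmem' : j ∈ diffs v u :=
        herase ▸ Finset.mem_erase.mpr ⟨fun hh => htj hh.symm, hjmem⟩
      have hj' : (diffs v u).min' hne_u = j := by
        apply le_antisymm (Finset.min'_le _ _ hjmem')
        apply Finset.min'_le
        have hnee : ((diffs v w).erase t).Nonempty := herase ▸ hne_u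
        have hsub : diffs v u ⊆ diffs v w := by rw [herase]; exact Finset.erase_subset t _
        exact hsub (Finset.min'_mem _ _)
      have hcard : (diffs v w).card = (diffs v u).card + 1 := by
        rw [herase]
        exact (Finset.card_erase_add_one htvw).symm
      rw [hj'] at hcond_u
      rw [hcard, Nat.even_add_one] at hcond_w
      tauto

/-- uniqueness of the "down" coordinate, in-neighbourhood version -/
lemma down_unique_in {k : ℕ} {v w u : Fin k → Bool} {t : Fin k}
    (hw : w = v ∨ rel w v) (hu : u = v ∨ rel u v)
    (hd : diffs u w = {t}) (hut : u t = v t) (hne : (diffs v w).Nonempty) :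
    t = (diffs v w).min' hne := by
  have htuw : u t ≠ w t := mem_diffs.mp (hd ▸ Finset.mem_singleton_self t)
  have hwt : w t ≠ v t := fun h => htuw (hut.trans h.symm)
  have hoff : ∀ i, i ≠ t → u i = w i := by
    intro i hi
    by_contra hne2
    exact hi (Finset.mem_singleton.mp (hd ▸ mem_diffs.mpr hne2))
  have htvw : t ∈ diffs v w := mem_diffs.mpr (Ne.symm hwt)
  have herase : diffs v u = (diffs v w).erase t := by
    ext i
    simp only [mem_diffs, Finset.mem_erase]
    by_cases hi : i = t
    · subst hi
      constructor
      · intro hh; exact absurd hut.symm hh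
      · rintro ⟨hh, -⟩; exact absurd rfl hh
    · rw [hoff i hi]
      exact ⟨fun hh => ⟨hi, hh⟩, fun hh => hh.2⟩
  rcases hu with hu | hu
  · -- u = v ⇒ diffs v w = {t}
    have hemp : (diffs v w).erase t = ∅ := by
      rw [← herase, hu]; ext i; simp [mem_diffs]
    have h0 : diffs v w = {t} := by
      apply Finset.eq_singleton_iff_unique_mem.mpr
      refine ⟨htvw, fun x hx => ?_⟩
      by_contra hxt
      have hx' : x ∈ (diffs v w).erase t := Finset.mem_erase.mpr ⟨hxt, hx⟩
      rw [hemp] at hx'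
      exact absurd hx' (Finset.notMem_empty x)
    have := min'_eq_of_eq h0 (hs := hne) (ht := Finset.singleton_nonempty t)
    rw [this, Finset.min'_singleton]
  · rcases hw with hw | hw
    · subst hw; exact absurd rfl hwt
    · obtain ⟨hne_w, hcond_w⟩ := hw
      obtain ⟨hne_u, hcond_u⟩ := hu
      -- normalize sides: diffs w v = diffs v w, diffs u v = diffs v u
      have hsw : diffs w v = diffs v w := diffs_comm w v
      have hsu : diffs u v = diffs v u := diffs_comm u v
      have hminw : (diffs w v).min' hne_w = (diffs v w).min' hne := min'_eq_of_eq hsw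
      set j := (diffs v w).min' hne with hj
      rw [hminw] at hcond_w
      by_contra htj
      have hjmem : j ∈ diffs v w := Finset.min'_mem _ _
      have hjmem' : j ∈ diffs v u :=
        herase ▸ Finset.mem_erase.mpr ⟨fun hh => htj hh.symm, hjmem⟩
      have hne_u' : (diffs v u).Nonempty := by rwa [← hsu]
      have hminu : (diffs u v).min' hne_u = (diffs v u).min' hne_u' := min'_eq_of_eq hsu
      have hj' : (diffs v u).min' hne_u' = j := by
        apply le_antisymm (Finset.min'_le _ _ hjmem')
        apply Finset.min'_le
        have hnee : ((diffs v w).erase t).Nonempty := herase ▸ hne_u'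
        have hsub : diffs v u ⊆ diffs v w := by rw [herase]; exact Finset.erase_subset t _
        exact hsub (Finset.min'_mem _ _)
      rw [hminu, hj'] at hcond_u
      have hujwj : u j = w j := hoff j (fun hh => htj hh.symm)
      rw [hujwj] at hcond_u
      have hcard : (diffs w v).card = (diffs u v).card + 1 := by
        rw [hsw, hsu, herase]
        exact (Finset.card_erase_add_one htvw).symm
      rw [hcard, Nat.even_add_one] at hcond_w
      tauto


/-- characterization of a "down"-neighbour inside a closed out-neighbourhood -/
lemma char_out {k : ℕ} {v w u : Fin k → Bool}
    (hw : w = v ∨ rel v w) (hu : u = v ∨ rel v u)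
    (hcard : (diffs u w).card = 1) (hle : rank v u ≤ rank v w) :
    ∃ hne : (diffs v w).Nonempty, (∀ i, i ≠ (diffs v w).min' hne → u i = w i) ∧
      u ((diffs v w).min' hne) = v ((diffs v w).min' hne) := by
  obtain ⟨t, hd⟩ := Finset.card_eq_one.mp hcard
  have htuw : u t ≠ w t := mem_diffs.mp (hd ▸ Finset.mem_singleton_self t)
  have hoff : ∀ i, i ≠ t → u i = w i := by
    intro i hi
    by_contra hne2
    exact hi (Finset.mem_singleton.mp (hd ▸ mem_diffs.mpr hne2))
  have hut : u t = v t := by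
    by_contra hvt
    have hwt : w t = v t := by
      cases hb : u t <;> cases hb2 : v t <;> cases hb3 : w t <;> simp_all
    have hdw : diffs w u = {t} := by rw [diffs_comm w u, hd]
    have := rank_lt (v := v) hdw hwt
    omega
  have hwt : w t ≠ v t := fun h => htuw (hut.trans h.symm)
  have hne : (diffs v w).Nonempty := ⟨t, mem_diffs.mpr (Ne.symm hwt)⟩
  have ht := down_unique_out hw hu hd hut hne
  exact ⟨hne, by rw [← ht]; exact hoff, by rw [← ht]; exact hut⟩

/-- characterization of a "down"-neighbour inside a closed in-neighbourhood -/
lemma char_in {k : ℕ} {v w u : Fin k → Bool}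
    (hw : w = v ∨ rel w v) (hu : u = v ∨ rel u v)
    (hcard : (diffs u w).card = 1) (hle : rank v u ≤ rank v w) :
    ∃ hne : (diffs v w).Nonempty, (∀ i, i ≠ (diffs v w).min' hne → u i = w i) ∧
      u ((diffs v w).min' hne) = v ((diffs v w).min' hne) := by
  obtain ⟨t, hd⟩ := Finset.card_eq_one.mp hcard
  have htuw : u t ≠ w t := mem_diffs.mp (hd ▸ Finset.mem_singleton_self t)
  have hoff : ∀ i, i ≠ t → u i = w i := by
    intro i hi
    by_contra hne2
    exact hi (Finset.mem_singleton.mp (hd ▸ mem_diffs.mpr hne2))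
  have hut : u t = v t := by
    by_contra hvt
    have hwt : w t = v t := by
      cases hb : u t <;> cases hb2 : v t <;> cases hb3 : w t <;> simp_all
    have hdw : diffs w u = {t} := by rw [diffs_comm w u, hd]
    have := rank_lt (v := v) hdw hwt
    omega
  have hwt : w t ≠ v t := fun h => htuw (hut.trans h.symm)
  have hne : (diffs v w).Nonempty := ⟨t, mem_diffs.mpr (Ne.symm hwt)⟩
  have ht := down_unique_in hw hu hd hut hne
  exact ⟨hne, by rw [← ht]; exact hoff, by rw [← ht]; exact hut⟩


end Aux

/-- For every positive integer k there is a tournament T on the vertex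
set `{0,1}^k` of the hypercube Q_k such that for every vertex v both the subgraph of
Q_k induced on the closed out-neighbourhood N⁺_T[v] and the one induced on the closed
in-neighbourhood N⁻_T[v] are forests. -/
theorem stmt_4 (k : ℕ) (hk : 1 ≤ k) :
    ∃ r : (Fin k → Bool) → (Fin k → Bool) → Prop,
      IsTournament r ∧
      ∀ v : Fin k → Bool,
        ((cubeGraph k).induce ({v} ∪ {u | r v u})).IsAcyclic ∧
        ((cubeGraph k).induce ({v} ∪ {u | r u v})).IsAcyclic := by
  refine ⟨rel, ⟨rel_irrefl, fun u v h => rel_asymm h⟩, fun v => ⟨?_, ?_⟩⟩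
  · apply isAcyclic_of_rank _ (fun x => rank v x.1)
    rintro ⟨w, hw⟩ ⟨u₁, hu₁⟩ ⟨u₂, hu₂⟩ ha1 ha2 hle1 hle2
    rw [Set.mem_union, Set.mem_singleton_iff, Set.mem_setOf_eq] at hw hu₁ hu₂
    have hc1 : (diffs u₁ w).card = 1 := by
      simp only [SimpleGraph.induce, SimpleGraph.comap_adj, Function.Embedding.coe_subtype,
        cubeGraph, SimpleGraph.fromRel_adj] at ha1
      rcases ha1.2 with h2 | h2
      · rw [diffs_comm]; exact h2
      · exact h2
    have hc2 : (diffs u₂ w).card = 1 := by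
      simp only [SimpleGraph.induce, SimpleGraph.comap_adj, Function.Embedding.coe_subtype,
        cubeGraph, SimpleGraph.fromRel_adj] at ha2
      rcases ha2.2 with h2 | h2
      · rw [diffs_comm]; exact h2
      · exact h2
    obtain ⟨hne, hoff1, hmin1⟩ := char_out hw hu₁ hc1 hle1
    obtain ⟨hne', hoff2, hmin2⟩ := char_out hw hu₂ hc2 hle2
    apply Subtype.ext
    show u₁ = u₂
    funext i
    by_cases hi : i = (diffs v w).min' hne
    · subst hi; rw [hmin1, hmin2]
    · rw [hoff1 i hi, ← hoff2 i hi]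
  · apply isAcyclic_of_rank _ (fun x => rank v x.1)
    rintro ⟨w, hw⟩ ⟨u₁, hu₁⟩ ⟨u₂, hu₂⟩ ha1 ha2 hle1 hle2
    rw [Set.mem_union, Set.mem_singleton_iff, Set.mem_setOf_eq] at hw hu₁ hu₂
    have hc1 : (diffs u₁ w).card = 1 := by
      simp only [SimpleGraph.induce, SimpleGraph.comap_adj, Function.Embedding.coe_subtype,
        cubeGraph, SimpleGraph.fromRel_adj] at ha1
      rcases ha1.2 with h2 | h2
      · rw [diffs_comm]; exact h2
      · exact h2
    have hc2 : (diffs u₂ w).card = 1 := by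
      simp only [SimpleGraph.induce, SimpleGraph.comap_adj, Function.Embedding.coe_subtype,
        cubeGraph, SimpleGraph.fromRel_adj] at ha2
      rcases ha2.2 with h2 | h2
      · rw [diffs_comm]; exact h2
      · exact h2
    obtain ⟨hne, hoff1, hmin1⟩ := char_in hw hu₁ hc1 hle1
    obtain ⟨hne', hoff2, hmin2⟩ := char_in hw hu₂ hc2 hle2
    apply Subtype.ext
    show u₁ = u₂
    funext i
    by_cases hi : i = (diffs v w).min' hne
    · subst hi; rw [hmin1, hmin2]
    · rw [hoff1 i hi, ← hoff2 i hi]
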